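/- Conversely, suppose for each i there is a symmetric left partial action ⇀_i of a Hopf algebra H on R_i, each iMj is a left R_i#H-module and right H^op#R_j-module with (1_i#h)·m = m·(h#1_j), (1_i#h)·r = h⇀_i r, (r_i#1)·m = r_i m, m·(1#r_j) = m r_j, and (1_i#h)·(mn) = ((1_i#h_(1))·m)((1_j#h_(2))·n). Then the map ▷ : H ⊗ R → R defined entrywise by h ▷ (m_ij) = ((1_i#h)·m_ij) is a symmetric left partial action of H on the generalized matrix algebra R leaving each ι_ij(iMj) invariant. -/

import Mathlib

open TensorProduct

section GMD

variable {k : Type*} [Field k] {n : ℕ}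
variable (M : Fin n → Fin n → Type*) [∀ i j, AddCommGroup (M i j)] [∀ i j, Module k (M i j)]
variable (θ : ∀ i j l : Fin n, M i j →ₗ[k] M j l →ₗ[k] M i l)
variable (e : ∀ i, M i i)

/-- A generalized matrix datum: the bilinear products `θ i j l` are associative and
the elements `e i = η_i(1)` are units. -/
structure IsGMDatum : Prop where
  assoc : ∀ (i j l m : Fin n) (x : M i j) (y : M j l) (z : M l m),
    θ i l m (θ i j l x y) z = θ i j m x (θ j l m y z)
  one_mul : ∀ (i j : Fin n) (x : M i j), θ i i j (e i) x = x
  mul_one : ∀ (i j : Fin n) (x : M i j), θ i j j x (e j) = x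

/-- The underlying space of the generalized matrix algebra `R = ⊕_{i,j} M i j`. -/
abbrev gmaSpace := ∀ p : Fin n × Fin n, M p.1 p.2

/-- Row-column multiplication on the generalized matrix algebra. -/
def gmaMul (x y : gmaSpace M) : gmaSpace M :=
  fun p => ∑ l, θ p.1 l p.2 (x (p.1, l)) (y (l, p.2))

/-- The unit `Σ_i ι_ii (e i)` of the generalized matrix algebra. -/
noncomputable def gmaOne : gmaSpace M :=
  ∑ i, Pi.single (M := fun p : Fin n × Fin n => M p.1 p.2) (i, i) (e i)

end GMD
/-- Sweedler-style sum `h ↦ Σ f(h₍₁₎) * g(h₍₂₎)` with respect to a bilinear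
multiplication `mul`. -/
noncomputable def sweedler {k H B : Type*} [CommRing k] [Ring H] [HopfAlgebra k H]
    [AddCommGroup B] [Module k B]
    (mul : B →ₗ[k] B →ₗ[k] B) (f g : H →ₗ[k] B) : H →ₗ[k] B :=
  TensorProduct.lift ((mul ∘ₗ f).compl₂ g) ∘ₗ Coalgebra.comul

/-- A symmetric left partial action of a Hopf algebra `H` on a (not necessarily
unital-typeclass) algebra `(A, mulA, oneA)`: (LPA1) `1_H·a = a`;
(LPA2) `h·(ab) = (h₍₁₎·a)(h₍₂₎·b)`;
(LPA3) `h·(g·a) = (h₍₁₎·1)(h₍₂₎g·a) = (h₍₁₎g·a)(h₍₂₎·1)`. -/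
structure IsLeftPartialActionOn (k : Type*) {H A : Type*} [CommRing k] [Ring H]
    [HopfAlgebra k H] [AddCommGroup A] [Module k A]
    (mulA : A →ₗ[k] A →ₗ[k] A) (oneA : A) (act : H →ₗ[k] A →ₗ[k] A) : Prop where
  lpa1 : ∀ a : A, act 1 a = a
  lpa2 : ∀ (h : H) (a b : A),
    act h (mulA a b) = sweedler mulA (act.flip a) (act.flip b) h
  lpa3 : ∀ (h g : H) (a : A),
    act h (act g a) =
      sweedler mulA (act.flip oneA) ((act.flip a) ∘ₗ LinearMap.mulRight k g) h
  lpa3' : ∀ (h g : H) (a : A),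
    act h (act g a) =
      sweedler mulA ((act.flip a) ∘ₗ LinearMap.mulRight k g) (act.flip oneA) h

section GMA

variable {k : Type*} [Field k] {n : ℕ}
variable (M : Fin n → Fin n → Type*) [∀ i j, AddCommGroup (M i j)] [∀ i j, Module k (M i j)]
variable (θ : ∀ i j l : Fin n, M i j →ₗ[k] M j l →ₗ[k] M i l)

/-- The multiplication of the generalized matrix algebra, as a bilinear map. -/
noncomputable def gmaMulL : gmaSpace M →ₗ[k] gmaSpace M →ₗ[k] gmaSpace M :=
  LinearMap.mk₂ k (gmaMul M θ)
    (fun x x' y => by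
      funext p; simp [gmaMul, map_add, LinearMap.add_apply, Finset.sum_add_distrib])
    (fun c x y => by
      funext p; simp [gmaMul, Finset.smul_sum])
    (fun x y y' => by
      funext p; simp [gmaMul, map_add, LinearMap.add_apply, Finset.sum_add_distrib])
    (fun c x y => by
      funext p; simp [gmaMul, Finset.smul_sum])

/-- The canonical inclusion `ι_ij : M i j → R` of a component into the generalized
matrix algebra. -/
noncomputable def gmaIncl (i j : Fin n) : M i j →ₗ[k] gmaSpace M :=
  LinearMap.single k (fun p : Fin n × Fin n => M p.1 p.2) (i, j)

variable {H : Type*} [Ring H] [HopfAlgebra k H]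

/-- The restriction `π_ij(h)(m) = ι_ij⁻¹(h ▷ ι_ij(m))` of a partial action on the
generalized matrix algebra to the component `M i j`. -/
noncomputable def actRestrict (act : H →ₗ[k] gmaSpace M →ₗ[k] gmaSpace M)
    (i j : Fin n) : H →ₗ[k] M i j →ₗ[k] M i j where
  toFun h := (LinearMap.proj (i, j)) ∘ₗ (act h) ∘ₗ (gmaIncl M i j)
  map_add' h h' := by ext m; simp
  map_smul' c h := by ext m; simp

end GMA
section SmashGeneric

variable {k H A : Type*} [CommRing k] [Ring H] [HopfAlgebra k H]
  [AddCommGroup A] [Module k A]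

/-- The left partial smash product multiplication on `A ⊗ H` for a (bilinear)
multiplication `mulA` on `A` and an action-type map `act`:
`(a⊗h)(b⊗g) = Σ a(h₍₁₎·b) ⊗ h₍₂₎g`. -/
noncomputable def lsmashMul (mulA : A →ₗ[k] A →ₗ[k] A) (act : H →ₗ[k] A →ₗ[k] A) :
    (A ⊗[k] H) ⊗[k] (A ⊗[k] H) →ₗ[k] A ⊗[k] H :=
  (TensorProduct.map
      (TensorProduct.lift (TensorProduct.lift
        (((LinearMap.llcomp k A A A) ∘ₗ mulA).compl₂ act)))
      (TensorProduct.lift (LinearMap.mul k H))) ∘ₗ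
  (TensorProduct.tensorTensorTensorComm k (A ⊗[k] H) H A H).toLinearMap ∘ₗ
  (LinearMap.rTensor (A ⊗[k] H)
      ((TensorProduct.assoc k A H H).symm.toLinearMap ∘ₗ
        (LinearMap.lTensor A (Coalgebra.comul (R := k)))))

/-- Curried form of the left partial smash multiplication. -/
noncomputable def lsmashMul₂ (mulA : A →ₗ[k] A →ₗ[k] A) (act : H →ₗ[k] A →ₗ[k] A) :
    (A ⊗[k] H) →ₗ[k] (A ⊗[k] H) →ₗ[k] A ⊗[k] H :=
  TensorProduct.curry (lsmashMul mulA act)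

/-- The right partial smash product multiplication on `H ⊗ A` for a (bilinear)
multiplication `mH` on `H` (e.g. the opposite one), a multiplication `mulA` on `A`,
and a right action-type map `ract`:  `(g⊗b)(h⊗a) = Σ mH g h₍₁₎ ⊗ (b·h₍₂₎)a`. -/
noncomputable def rsmashMulGen (mH : H →ₗ[k] H →ₗ[k] H) (mulA : A →ₗ[k] A →ₗ[k] A)
    (ract : A →ₗ[k] H →ₗ[k] A) :
    (H ⊗[k] A) ⊗[k] (H ⊗[k] A) →ₗ[k] H ⊗[k] A :=
  (TensorProduct.map (TensorProduct.lift mH)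
      ((TensorProduct.lift (TensorProduct.lift
          ((LinearMap.llcomp k H A (A →ₗ[k] A) mulA) ∘ₗ ract))) ∘ₗ
        (TensorProduct.assoc k A H A).symm.toLinearMap)) ∘ₗ
  (TensorProduct.tensorTensorTensorComm k H A H (H ⊗[k] A)).toLinearMap ∘ₗ
  (LinearMap.lTensor (H ⊗[k] A)
      ((TensorProduct.assoc k H H A).toLinearMap ∘ₗ
        (LinearMap.rTensor A (Coalgebra.comul (R := k)))))

/-- Curried form of the right partial smash multiplication. -/
noncomputable def rsmashMulGen₂ (mH : H →ₗ[k] H →ₗ[k] H) (mulA : A →ₗ[k] A →ₗ[k] A)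
    (ract : A →ₗ[k] H →ₗ[k] A) :
    (H ⊗[k] A) →ₗ[k] (H ⊗[k] A) →ₗ[k] H ⊗[k] A :=
  TensorProduct.curry (rsmashMulGen mH mulA ract)

end SmashGeneric

section Prim
variable {k H A : Type*} [CommRing k] [Ring H] [HopfAlgebra k H]
  [AddCommGroup A] [Module k A]

theorem lsmash_tmul (mulA : A →ₗ[k] A →ₗ[k] A) (act : H →ₗ[k] A →ₗ[k] A)
    (a b : A) (x y : H) :
    lsmashMul₂ mulA act (a ⊗ₜ x) (b ⊗ₜ y) =
      TensorProduct.lift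
        (((TensorProduct.mk k A H) ∘ₗ ((mulA a) ∘ₗ act.flip b)).compl₂
          (LinearMap.mulRight k y)) (Coalgebra.comul x) := by
  rw [lsmashMul₂, lsmashMul]
  simp only [TensorProduct.curry_apply, LinearMap.comp_apply,
    LinearMap.rTensor_tmul, LinearMap.lTensor_tmul]
  generalize Coalgebra.comul (R := k) x = t
  induction t using TensorProduct.induction_on with
  | zero => simp
  | tmul p q =>
      simp [TensorProduct.tensorTensorTensorComm_tmul, TensorProduct.assoc_symm_tmul,
        TensorProduct.map_tmul, TensorProduct.lift.tmul, LinearMap.mul_apply']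
  | add s t hs ht =>
      simp only [map_add, LinearMap.add_apply, TensorProduct.add_tmul, TensorProduct.tmul_add] at *
      rw [hs, ht]

theorem rsmash_tmul (mH : H →ₗ[k] H →ₗ[k] H) (mulA : A →ₗ[k] A →ₗ[k] A)
    (ract : A →ₗ[k] H →ₗ[k] A) (x y : H) (b a : A) :
    rsmashMulGen₂ mH mulA ract (x ⊗ₜ b) (y ⊗ₜ a) =
      TensorProduct.lift
        ((TensorProduct.mk k H A ∘ₗ mH x).compl₂
          ((mulA.flip a) ∘ₗ (ract b))) (Coalgebra.comul y) := by
  rw [rsmashMulGen₂, rsmashMulGen]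
  simp only [TensorProduct.curry_apply, LinearMap.comp_apply,
    LinearMap.rTensor_tmul, LinearMap.lTensor_tmul]
  generalize Coalgebra.comul (R := k) y = t
  induction t using TensorProduct.induction_on with
  | zero => simp
  | tmul p q =>
      simp [TensorProduct.tensorTensorTensorComm_tmul, TensorProduct.assoc_tmul,
        TensorProduct.assoc_symm_tmul, TensorProduct.map_tmul, TensorProduct.lift.tmul]
  | add s t hs ht =>
      simp only [map_add, LinearMap.add_apply, TensorProduct.add_tmul, TensorProduct.tmul_add] at *
      rw [hs, ht]

end Prim
section Tools
open Coalgebra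
variable {k H A : Type*} [CommRing k] [Ring H] [HopfAlgebra k H]
  [AddCommGroup A] [Module k A]

theorem sweedler_repr {B : Type*} [AddCommGroup B] [Module k B]
    (mul : B →ₗ[k] B →ₗ[k] B) (f g : H →ₗ[k] B) (x : H) (w : Coalgebra.Repr k x (H × H)) :
    sweedler mul f g x = ∑ i ∈ w.index, mul (f (w.left i)) (g (w.right i)) := by
  rw [sweedler, LinearMap.comp_apply, ← w.eq, map_sum]
  simp

variable (mulA : A →ₗ[k] A →ₗ[k] A) (oneA : A) (act : H →ₗ[k] A →ₗ[k] A)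

theorem lsmash_one_right (hpa : IsLeftPartialActionOn k mulA oneA act)
    (r : A) (wv : A ⊗[k] H) :
    lsmashMul₂ mulA act (r ⊗ₜ (1 : H)) wv =
      TensorProduct.map (mulA r) LinearMap.id wv := by
  induction wv using TensorProduct.induction_on with
  | zero => simp
  | tmul b z =>
      rw [lsmash_tmul, Bialgebra.comul_one, Algebra.TensorProduct.one_def]
      simp [hpa.lpa1]
  | add s t hs ht => rw [map_add, map_add, hs, ht]

theorem uU (hpa : IsLeftPartialActionOn k mulA oneA act)
    (hone1 : ∀ a, mulA oneA a = a) (x : H) :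
    lsmashMul₂ mulA act (oneA ⊗ₜ x) (oneA ⊗ₜ (1 : H)) =
      TensorProduct.map (act.flip oneA) LinearMap.id (Coalgebra.comul x) := by
  rw [lsmash_tmul]
  refine LinearMap.congr_fun ?_ (Coalgebra.comul (R := k) x)
  apply TensorProduct.ext'
  intro p q
  simp [hone1]

theorem lres (hpa : IsLeftPartialActionOn k mulA oneA act)
    (hone2 : ∀ a, mulA a oneA = a) (r : A) :
    lsmashMul₂ mulA act (r ⊗ₜ (1 : H)) (oneA ⊗ₜ (1 : H)) = r ⊗ₜ (1 : H) := by
  rw [lsmash_one_right mulA oneA act hpa]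
  simp [hone2]

theorem coll (hpa : IsLeftPartialActionOn k mulA oneA act)
    (hone1 : ∀ a, mulA oneA a = a) (y : H) (w : Coalgebra.Repr k y (H × H)) :
    ∑ i ∈ w.index, mulA (act (w.left i) oneA) (act (w.right i) oneA) = act y oneA := by
  have h2 := hpa.lpa2 y oneA oneA
  rw [sweedler_repr _ _ _ _ w] at h2
  simp only [LinearMap.flip_apply] at h2
  rw [← h2, hone1]

end Tools
section KeyL
open Coalgebra
variable {k H A : Type*} [CommRing k] [Ring H] [HopfAlgebra k H]
  [AddCommGroup A] [Module k A]
variable (mulA : A →ₗ[k] A →ₗ[k] A) (oneA : A) (act : H →ₗ[k] A →ₗ[k] A)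

theorem keyL (hpa : IsLeftPartialActionOn k mulA oneA act)
    (hone1 : ∀ a, mulA oneA a = a)
    (hassoc : ∀ a b c', mulA (mulA a b) c' = mulA a (mulA b c'))
    (c y : H) (w : Coalgebra.Repr k y (H × H)) :
    ∑ i ∈ w.index, mulA (act (w.left i) oneA) (act (w.right i) (act c oneA)) =
    ∑ i ∈ w.index, mulA (act (w.left i) oneA) (act (w.right i * c) oneA) := by
  classical
  let a₁ : ∀ i, Coalgebra.Repr k (w.left i) (H × H) := fun i => Coalgebra.Repr.arbitrary k (w.left i)
  let a₂ : ∀ i, Coalgebra.Repr k (w.right i) (H × H) := fun i => Coalgebra.Repr.arbitrary k (w.right i)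
  have expand : ∀ i, act (w.right i) (act c oneA) =
      ∑ j ∈ (a₂ i).index,
        mulA (act ((a₂ i).left j) oneA) (act ((a₂ i).right j * c) oneA) := by
    intro i
    have h3 := hpa.lpa3 (w.right i) c oneA
    rw [sweedler_repr _ _ _ _ (a₂ i)] at h3
    simpa using h3
  set Ξ : H ⊗[k] (H ⊗[k] H) →ₗ[k] A :=
    TensorProduct.lift mulA ∘ₗ TensorProduct.map (act.flip oneA)
      (TensorProduct.lift mulA ∘ₗ TensorProduct.map (act.flip oneA)
        ((act.flip oneA) ∘ₗ LinearMap.mulRight k c)) with hΞ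
  have hΞt : ∀ (x p q : H), Ξ (x ⊗ₜ (p ⊗ₜ q)) =
      mulA (act x oneA) (mulA (act p oneA) (act (q * c) oneA)) := by
    intro x p q; simp [hΞ]
  have E := Coalgebra.sum_tmul_tmul_eq w a₁ a₂
  have EΞ := congrArg Ξ E
  simp only [map_sum, hΞt] at EΞ
  calc ∑ i ∈ w.index, mulA (act (w.left i) oneA) (act (w.right i) (act c oneA))
      = ∑ i ∈ w.index, ∑ j ∈ (a₂ i).index, mulA (act (w.left i) oneA)
          (mulA (act ((a₂ i).left j) oneA) (act ((a₂ i).right j * c) oneA)) := by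
        simp only [expand, map_sum]
    _ = ∑ i ∈ w.index, ∑ j ∈ (a₁ i).index, mulA (act ((a₁ i).left j) oneA)
          (mulA (act ((a₁ i).right j) oneA) (act (w.right i * c) oneA)) := EΞ.symm
    _ = ∑ i ∈ w.index, ∑ j ∈ (a₁ i).index, mulA
          (mulA (act ((a₁ i).left j) oneA) (act ((a₁ i).right j) oneA))
          (act (w.right i * c) oneA) := by simp only [hassoc]
    _ = ∑ i ∈ w.index, (mulA (∑ j ∈ (a₁ i).index,
          mulA (act ((a₁ i).left j) oneA) (act ((a₁ i).right j) oneA)))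
          (act (w.right i * c) oneA) := by
        simp only [map_sum, LinearMap.coe_sum, Finset.sum_apply]
    _ = ∑ i ∈ w.index, mulA (act (w.left i) oneA) (act (w.right i * c) oneA) := by
        refine Finset.sum_congr rfl fun i _ => ?_
        rw [coll mulA oneA act hpa hone1 _ (a₁ i)]
end KeyL
section Key3L
open Coalgebra
variable {k H A : Type*} [CommRing k] [Ring H] [HopfAlgebra k H]
  [AddCommGroup A] [Module k A]
variable (mulA : A →ₗ[k] A →ₗ[k] A) (oneA : A) (act : H →ₗ[k] A →ₗ[k] A)

theorem key3L (hpa : IsLeftPartialActionOn k mulA oneA act)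
    (hone1 : ∀ a, mulA oneA a = a)
    (hassoc : ∀ a b c', mulA (mulA a b) c' = mulA a (mulA b c'))
    (c d h : H) (w : Coalgebra.Repr k h (H × H)) (a₂ : ∀ i, Coalgebra.Repr k (w.right i) (H × H)) :
    (∑ i ∈ w.index, ∑ m ∈ (a₂ i).index,
      mulA (act (w.left i) oneA) (act ((a₂ i).left m) (act c oneA)) ⊗ₜ[k]
        ((a₂ i).right m * d)) =
    ∑ i ∈ w.index, ∑ m ∈ (a₂ i).index,
      mulA (act (w.left i) oneA) (act ((a₂ i).left m * c) oneA) ⊗ₜ[k]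
        ((a₂ i).right m * d) := by
  classical
  let a₁ : ∀ i, Coalgebra.Repr k (w.left i) (H × H) := fun i => Coalgebra.Repr.arbitrary k (w.left i)
  set ΦL : H ⊗[k] (H ⊗[k] H) →ₗ[k] A ⊗[k] H :=
    (LinearMap.rTensor H (TensorProduct.lift mulA)) ∘ₗ
      (TensorProduct.assoc k A A H).symm.toLinearMap ∘ₗ
      TensorProduct.map (act.flip oneA)
        (TensorProduct.map (act.flip (act c oneA)) (LinearMap.mulRight k d)) with hΦL
  set ΦR : H ⊗[k] (H ⊗[k] H) →ₗ[k] A ⊗[k] H :=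
    (LinearMap.rTensor H (TensorProduct.lift mulA)) ∘ₗ
      (TensorProduct.assoc k A A H).symm.toLinearMap ∘ₗ
      TensorProduct.map (act.flip oneA)
        (TensorProduct.map ((act.flip oneA) ∘ₗ LinearMap.mulRight k c)
          (LinearMap.mulRight k d)) with hΦR
  have hΦLt : ∀ (x p q : H), ΦL (x ⊗ₜ (p ⊗ₜ q)) =
      mulA (act x oneA) (act p (act c oneA)) ⊗ₜ[k] (q * d) := by
    intro x p q; simp [hΦL]
  have hΦRt : ∀ (x p q : H), ΦR (x ⊗ₜ (p ⊗ₜ q)) =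
      mulA (act x oneA) (act (p * c) oneA) ⊗ₜ[k] (q * d) := by
    intro x p q; simp [hΦR]
  have E := Coalgebra.sum_tmul_tmul_eq w a₁ a₂
  have EL := congrArg ΦL E
  have ER := congrArg ΦR E
  simp only [map_sum, hΦLt, hΦRt] at EL ER
  rw [← EL, ← ER]
  refine Finset.sum_congr rfl fun i _ => ?_
  rw [← TensorProduct.sum_tmul, ← TensorProduct.sum_tmul]
  congr 1
  exact keyL mulA oneA act hpa hone1 hassoc c _ (a₁ i)
end Key3L
section SAL
open Coalgebra
variable {k H A : Type*} [CommRing k] [Ring H] [HopfAlgebra k H]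
  [AddCommGroup A] [Module k A]
variable (mulA : A →ₗ[k] A →ₗ[k] A) (oneA : A) (act : H →ₗ[k] A →ₗ[k] A)

theorem saL (hpa : IsLeftPartialActionOn k mulA oneA act)
    (hone1 : ∀ a, mulA oneA a = a)
    (hassoc : ∀ a b c', mulA (mulA a b) c' = mulA a (mulA b c'))
    (h g : H) (w : Coalgebra.Repr k h (H × H)) :
    lsmashMul₂ mulA act (lsmashMul₂ mulA act (oneA ⊗ₜ h) (oneA ⊗ₜ (1 : H)))
        (lsmashMul₂ mulA act (oneA ⊗ₜ g) (oneA ⊗ₜ (1 : H))) =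
      ∑ i ∈ w.index, lsmashMul₂ mulA act ((act (w.left i) oneA) ⊗ₜ (1 : H))
        (lsmashMul₂ mulA act (oneA ⊗ₜ (w.right i * g)) (oneA ⊗ₜ (1 : H))) := by
  classical
  let rg : Coalgebra.Repr k g (H × H) := Coalgebra.Repr.arbitrary k g
  let a₂ : ∀ i, Coalgebra.Repr k (w.right i) (H × H) := fun i => Coalgebra.Repr.arbitrary k (w.right i)
  have hL : lsmashMul₂ mulA act (lsmashMul₂ mulA act (oneA ⊗ₜ h) (oneA ⊗ₜ (1 : H)))
        (lsmashMul₂ mulA act (oneA ⊗ₜ g) (oneA ⊗ₜ (1 : H))) =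
      ∑ j ∈ rg.index, ∑ i ∈ w.index, ∑ m ∈ (a₂ i).index,
        mulA (act (w.left i) oneA)
          (act ((a₂ i).left m) (act (rg.left j) oneA)) ⊗ₜ[k]
            ((a₂ i).right m * rg.right j) := by
    rw [uU mulA oneA act hpa hone1 h, uU mulA oneA act hpa hone1 g, ← w.eq, ← rg.eq]
    simp only [map_sum, TensorProduct.map_tmul, LinearMap.id_coe, id_eq,
      LinearMap.sum_apply, lsmash_tmul]
    refine Finset.sum_congr rfl fun j _ => Finset.sum_congr rfl fun i _ => ?_
    rw [← (a₂ i).eq, map_sum]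
    simp
  have hR : (∑ i ∈ w.index, lsmashMul₂ mulA act ((act (w.left i) oneA) ⊗ₜ (1 : H))
        (lsmashMul₂ mulA act (oneA ⊗ₜ (w.right i * g)) (oneA ⊗ₜ (1 : H)))) =
      ∑ i ∈ w.index, ∑ j ∈ rg.index, ∑ m ∈ (a₂ i).index,
        mulA (act (w.left i) oneA)
          (act ((a₂ i).left m * rg.left j) oneA) ⊗ₜ[k]
            ((a₂ i).right m * rg.right j) := by
    refine Finset.sum_congr rfl fun i _ => ?_
    rw [uU mulA oneA act hpa hone1 (w.right i * g),
      lsmash_one_right mulA oneA act hpa, Bialgebra.comul_mul, ← (a₂ i).eq, ← rg.eq,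
      Finset.sum_mul_sum]
    simp only [Algebra.TensorProduct.tmul_mul_tmul, map_sum, TensorProduct.map_tmul,
      LinearMap.id_coe, id_eq, LinearMap.flip_apply]
    exact Finset.sum_comm
  calc lsmashMul₂ mulA act (lsmashMul₂ mulA act (oneA ⊗ₜ h) (oneA ⊗ₜ (1 : H)))
        (lsmashMul₂ mulA act (oneA ⊗ₜ g) (oneA ⊗ₜ (1 : H)))
      = ∑ j ∈ rg.index, ∑ i ∈ w.index, ∑ m ∈ (a₂ i).index,
          mulA (act (w.left i) oneA)
            (act ((a₂ i).left m) (act (rg.left j) oneA)) ⊗ₜ[k]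
              ((a₂ i).right m * rg.right j) := hL
    _ = ∑ j ∈ rg.index, ∑ i ∈ w.index, ∑ m ∈ (a₂ i).index,
          mulA (act (w.left i) oneA)
            (act ((a₂ i).left m * rg.left j) oneA) ⊗ₜ[k]
              ((a₂ i).right m * rg.right j) :=
        Finset.sum_congr rfl fun j _ =>
          key3L mulA oneA act hpa hone1 hassoc (rg.left j) (rg.right j) h w a₂
    _ = ∑ i ∈ w.index, ∑ j ∈ rg.index, ∑ m ∈ (a₂ i).index,
          mulA (act (w.left i) oneA)
            (act ((a₂ i).left m * rg.left j) oneA) ⊗ₜ[k]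
              ((a₂ i).right m * rg.right j) := Finset.sum_comm
    _ = _ := hR.symm

theorem pstarL (hpa : IsLeftPartialActionOn k mulA oneA act)
    (hone1 : ∀ a, mulA oneA a = a) (hone2 : ∀ a, mulA a oneA = a)
    (hassoc : ∀ a b c', mulA (mulA a b) c' = mulA a (mulA b c'))
    {N : Type*} [AddCommGroup N] [Module k N]
    (ρ : A →ₗ[k] N →ₗ[k] N) (Λ : (A ⊗[k] H) →ₗ[k] Module.End k N)
    (hmul : ∀ x ∈ Submodule.span k {z : A ⊗[k] H | ∃ (a : A) (hh : H),
        z = lsmashMul₂ mulA act (a ⊗ₜ hh) (oneA ⊗ₜ (1 : H))},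
      ∀ y ∈ Submodule.span k {z : A ⊗[k] H | ∃ (a : A) (hh : H),
        z = lsmashMul₂ mulA act (a ⊗ₜ hh) (oneA ⊗ₜ (1 : H))},
      Λ (lsmashMul₂ mulA act x y) = Λ x * Λ y)
    (hr : ∀ (r : A) (m : N), Λ (lsmashMul₂ mulA act (r ⊗ₜ (1 : H)) (oneA ⊗ₜ (1 : H))) m
        = ρ r m)
    (h g : H) (m : N) (w : Coalgebra.Repr k h (H × H)) :
    Λ (lsmashMul₂ mulA act (oneA ⊗ₜ h) (oneA ⊗ₜ (1 : H)))
      (Λ (lsmashMul₂ mulA act (oneA ⊗ₜ g) (oneA ⊗ₜ (1 : H))) m) =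
    ∑ i ∈ w.index, ρ (act (w.left i) oneA)
      (Λ (lsmashMul₂ mulA act (oneA ⊗ₜ (w.right i * g)) (oneA ⊗ₜ (1 : H))) m) := by
  have memU : ∀ x : H, lsmashMul₂ mulA act (oneA ⊗ₜ x) (oneA ⊗ₜ (1 : H)) ∈
      Submodule.span k {z : A ⊗[k] H | ∃ (a : A) (hh : H),
        z = lsmashMul₂ mulA act (a ⊗ₜ hh) (oneA ⊗ₜ (1 : H))} :=
    fun x => Submodule.subset_span ⟨oneA, x, rfl⟩
  have memR : ∀ r : A, (r ⊗ₜ (1 : H)) ∈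
      Submodule.span k {z : A ⊗[k] H | ∃ (a : A) (hh : H),
        z = lsmashMul₂ mulA act (a ⊗ₜ hh) (oneA ⊗ₜ (1 : H))} :=
    fun r => Submodule.subset_span ⟨r, 1, (lres mulA oneA act hpa hone2 r).symm⟩
  have step1 : Λ (lsmashMul₂ mulA act (oneA ⊗ₜ h) (oneA ⊗ₜ (1 : H)))
      (Λ (lsmashMul₂ mulA act (oneA ⊗ₜ g) (oneA ⊗ₜ (1 : H))) m) =
      Λ (lsmashMul₂ mulA act (lsmashMul₂ mulA act (oneA ⊗ₜ h) (oneA ⊗ₜ (1 : H)))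
        (lsmashMul₂ mulA act (oneA ⊗ₜ g) (oneA ⊗ₜ (1 : H)))) m := by
    rw [hmul _ (memU h) _ (memU g)]; rfl
  rw [step1, saL mulA oneA act hpa hone1 hassoc h g w, map_sum, LinearMap.sum_apply]
  refine Finset.sum_congr rfl fun i _ => ?_
  rw [hmul _ (memR (act (w.left i) oneA)) _ (memU (w.right i * g))]
  rw [Module.End.mul_apply, ← hr]
  rw [lres mulA oneA act hpa hone2]
end SAL
section RightStack
open Coalgebra
variable {k H A : Type*} [CommRing k] [Ring H] [HopfAlgebra k H]
  [AddCommGroup A] [Module k A]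
variable (mulA : A →ₗ[k] A →ₗ[k] A) (oneA : A) (act : H →ₗ[k] A →ₗ[k] A)

theorem rsmash_one_right (hpa : IsLeftPartialActionOn k mulA oneA act)
    (wv : H ⊗[k] A) (a : A) :
    rsmashMulGen₂ (LinearMap.mul k H).flip mulA act.flip wv ((1 : H) ⊗ₜ a) =
      TensorProduct.map LinearMap.id (mulA.flip a) wv := by
  induction wv using TensorProduct.induction_on with
  | zero => simp
  | tmul x b =>
      rw [rsmash_tmul, Bialgebra.comul_one, Algebra.TensorProduct.one_def]
      simp [hpa.lpa1]
  | add s t hs ht =>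
      rw [map_add, LinearMap.add_apply, map_add, hs, ht]

theorem vU (hpa : IsLeftPartialActionOn k mulA oneA act)
    (hone2 : ∀ a, mulA a oneA = a) (x : H) :
    rsmashMulGen₂ (LinearMap.mul k H).flip mulA act.flip ((1 : H) ⊗ₜ oneA) (x ⊗ₜ oneA) =
      TensorProduct.map LinearMap.id (act.flip oneA) (Coalgebra.comul x) := by
  rw [rsmash_tmul]
  refine LinearMap.congr_fun ?_ (Coalgebra.comul (R := k) x)
  apply TensorProduct.ext'
  intro p q
  simp [hone2]

theorem rres (hpa : IsLeftPartialActionOn k mulA oneA act)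
    (hone1 : ∀ a, mulA oneA a = a) (a : A) :
    rsmashMulGen₂ (LinearMap.mul k H).flip mulA act.flip ((1 : H) ⊗ₜ oneA)
      ((1 : H) ⊗ₜ a) = (1 : H) ⊗ₜ a := by
  rw [rsmash_one_right mulA oneA act hpa]
  simp [hone1]

theorem keyR (hpa : IsLeftPartialActionOn k mulA oneA act)
    (hone1 : ∀ a, mulA oneA a = a)
    (hassoc : ∀ a b c', mulA (mulA a b) c' = mulA a (mulA b c'))
    (c y : H) (w : Coalgebra.Repr k y (H × H)) :
    ∑ i ∈ w.index, mulA (act (w.left i) (act c oneA)) (act (w.right i) oneA) =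
    ∑ i ∈ w.index, mulA (act (w.left i * c) oneA) (act (w.right i) oneA) := by
  classical
  let a₁ : ∀ i, Coalgebra.Repr k (w.left i) (H × H) := fun i => Coalgebra.Repr.arbitrary k (w.left i)
  let a₂ : ∀ i, Coalgebra.Repr k (w.right i) (H × H) := fun i => Coalgebra.Repr.arbitrary k (w.right i)
  have expand : ∀ i, act (w.left i) (act c oneA) =
      ∑ j ∈ (a₁ i).index,
        mulA (act ((a₁ i).left j * c) oneA) (act ((a₁ i).right j) oneA) := by
    intro i
    have h3 := hpa.lpa3' (w.left i) c oneA
    rw [sweedler_repr _ _ _ _ (a₁ i)] at h3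
    simpa using h3
  set Ξ : H ⊗[k] (H ⊗[k] H) →ₗ[k] A :=
    TensorProduct.lift mulA ∘ₗ TensorProduct.map
      ((act.flip oneA) ∘ₗ LinearMap.mulRight k c)
      (TensorProduct.lift mulA ∘ₗ TensorProduct.map (act.flip oneA) (act.flip oneA))
    with hΞ
  have hΞt : ∀ (x p q : H), Ξ (x ⊗ₜ (p ⊗ₜ q)) =
      mulA (act (x * c) oneA) (mulA (act p oneA) (act q oneA)) := by
    intro x p q; simp [hΞ]
  have E := Coalgebra.sum_tmul_tmul_eq w a₁ a₂
  have EΞ := congrArg Ξ E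
  simp only [map_sum, hΞt] at EΞ
  calc ∑ i ∈ w.index, mulA (act (w.left i) (act c oneA)) (act (w.right i) oneA)
      = ∑ i ∈ w.index, ∑ j ∈ (a₁ i).index,
          mulA (mulA (act ((a₁ i).left j * c) oneA) (act ((a₁ i).right j) oneA))
            (act (w.right i) oneA) := by
        simp only [expand, LinearMap.coe_sum, Finset.sum_apply, map_sum,
          LinearMap.sum_apply]
    _ = ∑ i ∈ w.index, ∑ j ∈ (a₁ i).index,
          mulA (act ((a₁ i).left j * c) oneA)
            (mulA (act ((a₁ i).right j) oneA) (act (w.right i) oneA)) := by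
        simp only [hassoc]
    _ = ∑ i ∈ w.index, ∑ j ∈ (a₂ i).index,
          mulA (act (w.left i * c) oneA)
            (mulA (act ((a₂ i).left j) oneA) (act ((a₂ i).right j) oneA)) := EΞ
    _ = ∑ i ∈ w.index, mulA (act (w.left i * c) oneA) (act (w.right i) oneA) := by
        refine Finset.sum_congr rfl fun i _ => ?_
        rw [← map_sum, coll mulA oneA act hpa hone1 _ (a₂ i)]

theorem key3R (hpa : IsLeftPartialActionOn k mulA oneA act)
    (hone1 : ∀ a, mulA oneA a = a)
    (hassoc : ∀ a b c', mulA (mulA a b) c' = mulA a (mulA b c'))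
    (c d h : H) (w : Coalgebra.Repr k h (H × H)) (a₁ : ∀ i, Coalgebra.Repr k (w.left i) (H × H)) :
    (∑ i ∈ w.index, ∑ m ∈ (a₁ i).index,
      ((a₁ i).left m * d) ⊗ₜ[k]
        mulA (act ((a₁ i).right m) (act c oneA)) (act (w.right i) oneA)) =
    ∑ i ∈ w.index, ∑ m ∈ (a₁ i).index,
      ((a₁ i).left m * d) ⊗ₜ[k]
        mulA (act ((a₁ i).right m * c) oneA) (act (w.right i) oneA) := by
  classical
  let a₂ : ∀ i, Coalgebra.Repr k (w.right i) (H × H) := fun i => Coalgebra.Repr.arbitrary k (w.right i)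
  set ΨL : H ⊗[k] (H ⊗[k] H) →ₗ[k] H ⊗[k] A :=
    TensorProduct.map (LinearMap.mulRight k d)
      (TensorProduct.lift mulA ∘ₗ
        TensorProduct.map (act.flip (act c oneA)) (act.flip oneA)) with hΨL
  set ΨR : H ⊗[k] (H ⊗[k] H) →ₗ[k] H ⊗[k] A :=
    TensorProduct.map (LinearMap.mulRight k d)
      (TensorProduct.lift mulA ∘ₗ
        TensorProduct.map ((act.flip oneA) ∘ₗ LinearMap.mulRight k c)
          (act.flip oneA)) with hΨR
  have hΨLt : ∀ (x p q : H), ΨL (x ⊗ₜ (p ⊗ₜ q)) =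
      (x * d) ⊗ₜ[k] mulA (act p (act c oneA)) (act q oneA) := by
    intro x p q; simp [hΨL]
  have hΨRt : ∀ (x p q : H), ΨR (x ⊗ₜ (p ⊗ₜ q)) =
      (x * d) ⊗ₜ[k] mulA (act (p * c) oneA) (act q oneA) := by
    intro x p q; simp [hΨR]
  have E := Coalgebra.sum_tmul_tmul_eq w a₁ a₂
  have EL := congrArg ΨL E
  have ER := congrArg ΨR E
  simp only [map_sum, hΨLt, hΨRt] at EL ER
  rw [EL, ER]
  refine Finset.sum_congr rfl fun i _ => ?_
  rw [← TensorProduct.tmul_sum, ← TensorProduct.tmul_sum]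
  congr 1
  exact keyR mulA oneA act hpa hone1 hassoc c _ (a₂ i)
end RightStack
section SAR
open Coalgebra
variable {k H A : Type*} [CommRing k] [Ring H] [HopfAlgebra k H]
  [AddCommGroup A] [Module k A]
variable (mulA : A →ₗ[k] A →ₗ[k] A) (oneA : A) (act : H →ₗ[k] A →ₗ[k] A)

theorem saR (hpa : IsLeftPartialActionOn k mulA oneA act)
    (hone1 : ∀ a, mulA oneA a = a) (hone2 : ∀ a, mulA a oneA = a)
    (hassoc : ∀ a b c', mulA (mulA a b) c' = mulA a (mulA b c'))
    (h g : H) (w : Coalgebra.Repr k h (H × H)) :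
    rsmashMulGen₂ (LinearMap.mul k H).flip mulA act.flip
        (rsmashMulGen₂ (LinearMap.mul k H).flip mulA act.flip
          ((1 : H) ⊗ₜ oneA) (g ⊗ₜ oneA))
        (rsmashMulGen₂ (LinearMap.mul k H).flip mulA act.flip
          ((1 : H) ⊗ₜ oneA) (h ⊗ₜ oneA)) =
      ∑ i ∈ w.index,
        rsmashMulGen₂ (LinearMap.mul k H).flip mulA act.flip
          (rsmashMulGen₂ (LinearMap.mul k H).flip mulA act.flip
            ((1 : H) ⊗ₜ oneA) ((w.left i * g) ⊗ₜ oneA))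
          ((1 : H) ⊗ₜ (act (w.right i) oneA)) := by
  classical
  let rg : Coalgebra.Repr k g (H × H) := Coalgebra.Repr.arbitrary k g
  let a₁ : ∀ i, Coalgebra.Repr k (w.left i) (H × H) := fun i => Coalgebra.Repr.arbitrary k (w.left i)
  have hL : rsmashMulGen₂ (LinearMap.mul k H).flip mulA act.flip
        (rsmashMulGen₂ (LinearMap.mul k H).flip mulA act.flip
          ((1 : H) ⊗ₜ oneA) (g ⊗ₜ oneA))
        (rsmashMulGen₂ (LinearMap.mul k H).flip mulA act.flip
          ((1 : H) ⊗ₜ oneA) (h ⊗ₜ oneA)) =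
      ∑ i ∈ w.index, ∑ j ∈ rg.index, ∑ m ∈ (a₁ i).index,
        ((a₁ i).left m * rg.left j) ⊗ₜ[k]
          mulA (act ((a₁ i).right m) (act (rg.right j) oneA))
            (act (w.right i) oneA) := by
    rw [vU mulA oneA act hpa hone2 h, vU mulA oneA act hpa hone2 g, ← w.eq, ← rg.eq]
    simp only [map_sum, TensorProduct.map_tmul, LinearMap.id_coe, id_eq,
      LinearMap.sum_apply, rsmash_tmul]
    refine Finset.sum_congr rfl fun i _ => Finset.sum_congr rfl fun j _ => ?_
    rw [← (a₁ i).eq, map_sum]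
    simp
  have hR : (∑ i ∈ w.index,
        rsmashMulGen₂ (LinearMap.mul k H).flip mulA act.flip
          (rsmashMulGen₂ (LinearMap.mul k H).flip mulA act.flip
            ((1 : H) ⊗ₜ oneA) ((w.left i * g) ⊗ₜ oneA))
          ((1 : H) ⊗ₜ (act (w.right i) oneA))) =
      ∑ i ∈ w.index, ∑ j ∈ rg.index, ∑ m ∈ (a₁ i).index,
        ((a₁ i).left m * rg.left j) ⊗ₜ[k]
          mulA (act ((a₁ i).right m * rg.right j) oneA)
            (act (w.right i) oneA) := by
    refine Finset.sum_congr rfl fun i _ => ?_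
    rw [vU mulA oneA act hpa hone2 (w.left i * g),
      rsmash_one_right mulA oneA act hpa, Bialgebra.comul_mul, ← (a₁ i).eq, ← rg.eq,
      Finset.sum_mul_sum]
    simp only [Algebra.TensorProduct.tmul_mul_tmul, map_sum, TensorProduct.map_tmul,
      LinearMap.id_coe, id_eq, LinearMap.flip_apply]
    exact Finset.sum_comm
  calc rsmashMulGen₂ (LinearMap.mul k H).flip mulA act.flip
        (rsmashMulGen₂ (LinearMap.mul k H).flip mulA act.flip
          ((1 : H) ⊗ₜ oneA) (g ⊗ₜ oneA))
        (rsmashMulGen₂ (LinearMap.mul k H).flip mulA act.flip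
          ((1 : H) ⊗ₜ oneA) (h ⊗ₜ oneA))
      = ∑ i ∈ w.index, ∑ j ∈ rg.index, ∑ m ∈ (a₁ i).index,
          ((a₁ i).left m * rg.left j) ⊗ₜ[k]
            mulA (act ((a₁ i).right m) (act (rg.right j) oneA))
              (act (w.right i) oneA) := hL
    _ = ∑ j ∈ rg.index, ∑ i ∈ w.index, ∑ m ∈ (a₁ i).index,
          ((a₁ i).left m * rg.left j) ⊗ₜ[k]
            mulA (act ((a₁ i).right m) (act (rg.right j) oneA))
              (act (w.right i) oneA) := Finset.sum_comm
    _ = ∑ j ∈ rg.index, ∑ i ∈ w.index, ∑ m ∈ (a₁ i).index,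
          ((a₁ i).left m * rg.left j) ⊗ₜ[k]
            mulA (act ((a₁ i).right m * rg.right j) oneA)
              (act (w.right i) oneA) :=
        Finset.sum_congr rfl fun j _ =>
          key3R mulA oneA act hpa hone1 hassoc (rg.right j) (rg.left j) h w a₁
    _ = ∑ i ∈ w.index, ∑ j ∈ rg.index, ∑ m ∈ (a₁ i).index,
          ((a₁ i).left m * rg.left j) ⊗ₜ[k]
            mulA (act ((a₁ i).right m * rg.right j) oneA)
              (act (w.right i) oneA) := Finset.sum_comm
    _ = _ := hR.symm

theorem pstarR (hpa : IsLeftPartialActionOn k mulA oneA act)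
    (hone1 : ∀ a, mulA oneA a = a) (hone2 : ∀ a, mulA a oneA = a)
    (hassoc : ∀ a b c', mulA (mulA a b) c' = mulA a (mulA b c'))
    {N : Type*} [AddCommGroup N] [Module k N]
    (ρ : N →ₗ[k] A →ₗ[k] N) (Λ : (H ⊗[k] A) →ₗ[k] Module.End k N)
    (hmul : ∀ x ∈ Submodule.span k {z : H ⊗[k] A | ∃ (hh : H) (a : A),
        z = rsmashMulGen₂ (LinearMap.mul k H).flip mulA act.flip
          ((1 : H) ⊗ₜ oneA) (hh ⊗ₜ a)},
      ∀ y ∈ Submodule.span k {z : H ⊗[k] A | ∃ (hh : H) (a : A),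
        z = rsmashMulGen₂ (LinearMap.mul k H).flip mulA act.flip
          ((1 : H) ⊗ₜ oneA) (hh ⊗ₜ a)},
      Λ (rsmashMulGen₂ (LinearMap.mul k H).flip mulA act.flip x y) = Λ y * Λ x)
    (hr : ∀ (a : A) (m : N),
      Λ (rsmashMulGen₂ (LinearMap.mul k H).flip mulA act.flip
        ((1 : H) ⊗ₜ oneA) ((1 : H) ⊗ₜ a)) m = ρ m a)
    (h g : H) (m : N) (w : Coalgebra.Repr k h (H × H)) :
    Λ (rsmashMulGen₂ (LinearMap.mul k H).flip mulA act.flip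
        ((1 : H) ⊗ₜ oneA) (h ⊗ₜ oneA))
      (Λ (rsmashMulGen₂ (LinearMap.mul k H).flip mulA act.flip
        ((1 : H) ⊗ₜ oneA) (g ⊗ₜ oneA)) m) =
    ∑ i ∈ w.index,
      ρ (Λ (rsmashMulGen₂ (LinearMap.mul k H).flip mulA act.flip
          ((1 : H) ⊗ₜ oneA) ((w.left i * g) ⊗ₜ oneA)) m)
        (act (w.right i) oneA) := by
  have memV : ∀ x : H, rsmashMulGen₂ (LinearMap.mul k H).flip mulA act.flip
      ((1 : H) ⊗ₜ oneA) (x ⊗ₜ oneA) ∈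
      Submodule.span k {z : H ⊗[k] A | ∃ (hh : H) (a : A),
        z = rsmashMulGen₂ (LinearMap.mul k H).flip mulA act.flip
          ((1 : H) ⊗ₜ oneA) (hh ⊗ₜ a)} :=
    fun x => Submodule.subset_span ⟨x, oneA, rfl⟩
  have memA : ∀ a : A, ((1 : H) ⊗ₜ a) ∈
      Submodule.span k {z : H ⊗[k] A | ∃ (hh : H) (a : A),
        z = rsmashMulGen₂ (LinearMap.mul k H).flip mulA act.flip
          ((1 : H) ⊗ₜ oneA) (hh ⊗ₜ a)} :=
    fun a => Submodule.subset_span ⟨1, a, (rres mulA oneA act hpa hone1 a).symm⟩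
  have step1 : Λ (rsmashMulGen₂ (LinearMap.mul k H).flip mulA act.flip
        ((1 : H) ⊗ₜ oneA) (h ⊗ₜ oneA))
      (Λ (rsmashMulGen₂ (LinearMap.mul k H).flip mulA act.flip
        ((1 : H) ⊗ₜ oneA) (g ⊗ₜ oneA)) m) =
      Λ (rsmashMulGen₂ (LinearMap.mul k H).flip mulA act.flip
        (rsmashMulGen₂ (LinearMap.mul k H).flip mulA act.flip
          ((1 : H) ⊗ₜ oneA) (g ⊗ₜ oneA))
        (rsmashMulGen₂ (LinearMap.mul k H).flip mulA act.flip
          ((1 : H) ⊗ₜ oneA) (h ⊗ₜ oneA))) m := by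
    rw [hmul _ (memV g) _ (memV h)]; rfl
  rw [step1, saR mulA oneA act hpa hone1 hone2 hassoc h g w, map_sum,
    LinearMap.sum_apply]
  refine Finset.sum_congr rfl fun i _ => ?_
  rw [hmul _ (memV (w.left i * g)) _ (memA (act (w.right i) oneA))]
  rw [Module.End.mul_apply, ← hr]
  rw [rres mulA oneA act hpa hone1]
end SAR
/-- **converse direction of Theorem 3.4.**  Suppose that for each `i`
there is a symmetric left partial action `⇀_i` of `H` on `R_i = M i i`, and that each
`M i j` is a left `R_i # H`-module and a right `H^op # R_j`-module (encoded by the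
multiplicative unital maps `Lmod i j` and the anti-multiplicative unital maps
`Rmod i j` on the respective partial smash products) such that
`(1_i#h)·m = m·(h#1_j)`, `(1_i#h)·r = h ⇀_i r`, `(r#1)·m = r m`, `m·(1#r) = m r`, and
`(1_i#h)·(mn) = ((1_i#h₍₁₎)·m)((1_j#h₍₂₎)·n)`.  Then `h ▷ (m_ij) := ((1_i#h)·m_ij)`
defines a symmetric left partial action of `H` on the generalized matrix algebra `R`
leaving each `ι_ij(M i j)` invariant. -/
theorem gma_partial_action_of_local_data
    {k : Type*} [Field k] {n : ℕ}
    (M : Fin n → Fin n → Type*) [∀ i j, AddCommGroup (M i j)] [∀ i j, Module k (M i j)]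
    (θ : ∀ i j l : Fin n, M i j →ₗ[k] M j l →ₗ[k] M i l)
    (e : ∀ i, M i i) (hd : IsGMDatum M θ e)
    {H : Type*} [Ring H] [HopfAlgebra k H]
    (acti : ∀ i, H →ₗ[k] M i i →ₗ[k] M i i)
    (hacti : ∀ i, IsLeftPartialActionOn k (θ i i i) (e i) (acti i))
    (Lmod : ∀ i j, (M i i ⊗[k] H) →ₗ[k] Module.End k (M i j))
    (Rmod : ∀ i j, (H ⊗[k] M j j) →ₗ[k] Module.End k (M i j))
    -- `M i j` is a left module over the left partial smash product `R_i # H`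
    (hLmul : ∀ i j : Fin n,
      ∀ x ∈ Submodule.span k {z : M i i ⊗[k] H | ∃ (a : M i i) (h : H),
          z = lsmashMul₂ (θ i i i) (acti i) (a ⊗ₜ h) ((e i) ⊗ₜ (1 : H))},
      ∀ y ∈ Submodule.span k {z : M i i ⊗[k] H | ∃ (a : M i i) (h : H),
          z = lsmashMul₂ (θ i i i) (acti i) (a ⊗ₜ h) ((e i) ⊗ₜ (1 : H))},
        Lmod i j (lsmashMul₂ (θ i i i) (acti i) x y) = Lmod i j x * Lmod i j y)
    (hLone : ∀ i j : Fin n,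
      Lmod i j (lsmashMul₂ (θ i i i) (acti i)
        ((e i) ⊗ₜ (1 : H)) ((e i) ⊗ₜ (1 : H))) = 1)
    -- `M i j` is a right module over the right partial smash product `H^op # R_j`
    (hRmul : ∀ i j : Fin n,
      ∀ x ∈ Submodule.span k {z : H ⊗[k] M j j | ∃ (h : H) (a : M j j),
          z = rsmashMulGen₂ (LinearMap.mul k H).flip (θ j j j) ((acti j).flip)
                ((1 : H) ⊗ₜ (e j)) (h ⊗ₜ a)},
      ∀ y ∈ Submodule.span k {z : H ⊗[k] M j j | ∃ (h : H) (a : M j j),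
          z = rsmashMulGen₂ (LinearMap.mul k H).flip (θ j j j) ((acti j).flip)
                ((1 : H) ⊗ₜ (e j)) (h ⊗ₜ a)},
        Rmod i j (rsmashMulGen₂ (LinearMap.mul k H).flip (θ j j j) ((acti j).flip) x y) =
          Rmod i j y * Rmod i j x)
    (hRone : ∀ i j : Fin n,
      Rmod i j (rsmashMulGen₂ (LinearMap.mul k H).flip (θ j j j) ((acti j).flip)
        ((1 : H) ⊗ₜ (e j)) ((1 : H) ⊗ₜ (e j))) = 1) :
    -- `u i h = 1_i # h` in `R_i # H`,  `v j h = h # 1_j` in `H^op # R_j`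
    ∀ u : ∀ i : Fin n, H →ₗ[k] (M i i ⊗[k] H),
      (∀ (i : Fin n) (h : H), u i h =
        lsmashMul₂ (θ i i i) (acti i) ((e i) ⊗ₜ h) ((e i) ⊗ₜ (1 : H))) →
    ∀ v : ∀ j : Fin n, H →ₗ[k] (H ⊗[k] M j j),
      (∀ (j : Fin n) (h : H), v j h =
        rsmashMulGen₂ (LinearMap.mul k H).flip (θ j j j) ((acti j).flip)
          ((1 : H) ⊗ₜ (e j)) (h ⊗ₜ (e j))) →
    -- `(1_i#h)·m = m·(h#1_j)`
    (∀ (i j : Fin n) (h : H) (m : M i j), Lmod i j (u i h) m = Rmod i j (v j h) m) →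
    -- `(1_i#h)·r = h ⇀_i r`
    (∀ (i : Fin n) (h : H) (r : M i i), Lmod i i (u i h) r = acti i h r) →
    -- `(r#1)·m = r m`
    (∀ (i j : Fin n) (r : M i i) (m : M i j),
      Lmod i j (lsmashMul₂ (θ i i i) (acti i) (r ⊗ₜ (1 : H)) ((e i) ⊗ₜ (1 : H))) m =
        θ i i j r m) →
    -- `m·(1#r) = m r`
    (∀ (i j : Fin n) (m : M i j) (r : M j j),
      Rmod i j (rsmashMulGen₂ (LinearMap.mul k H).flip (θ j j j) ((acti j).flip)
          ((1 : H) ⊗ₜ (e j)) ((1 : H) ⊗ₜ r)) m = θ i j j m r) →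
    -- `(1_i#h)·(mn) = ((1_i#h₍₁₎)·m)((1_j#h₍₂₎)·n)`
    (∀ (i j l : Fin n) (h : H) (m : M i j) (nn : M j l),
      Lmod i l (u i h) (θ i j l m nn) =
        TensorProduct.lift
          (((θ i j l ∘ₗ ((Lmod i j ∘ₗ u i).flip m)).compl₂
              ((Lmod j l ∘ₗ u j).flip nn)))
          (Coalgebra.comul (R := k) h)) →
    -- then the entrywise map `h ▷ (m_ij) = (1_i#h)·m_ij` is a symmetric left partial
    -- action on `R` leaving each `ι_ij(M i j)` invariant
    ∀ actR : H →ₗ[k] gmaSpace M →ₗ[k] gmaSpace M,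
      (∀ (h : H) (x : gmaSpace M) (p : Fin n × Fin n),
        actR h x p = Lmod p.1 p.2 (u p.1 h) (x p)) →
      IsLeftPartialActionOn k (gmaMulL M θ) (gmaOne M e) actR ∧
      (∀ (i j : Fin n) (h : H) (m : M i j),
        actR h (gmaIncl (k := k) M i j m) ∈ LinearMap.range (gmaIncl (k := k) M i j)) := by
  intro u hu v hv hLR hact hre hre' hcm actR hactR
  classical
  have hOne_diag : ∀ i : Fin n, gmaOne M e (i, i) = e i := by
    intro i
    rw [gmaOne, Finset.sum_apply]
    rw [Finset.sum_eq_single_of_mem i (Finset.mem_univ i)]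
    · exact Pi.single_eq_same _ _
    · intro q _ hq
      exact Pi.single_eq_of_ne (by simp [Prod.ext_iff, Ne.symm hq]) _
  have hOne_off : ∀ i j : Fin n, i ≠ j → gmaOne M e (i, j) = 0 := by
    intro i j hij
    rw [gmaOne, Finset.sum_apply]
    refine Finset.sum_eq_zero fun q _ => ?_
    refine Pi.single_eq_of_ne ?_ _
    intro hc
    rw [Prod.ext_iff] at hc
    exact hij (hc.1.trans hc.2.symm)
  refine ⟨⟨?_, ?_, ?_, ?_⟩, ?_⟩
  · -- lpa1
    intro a
    funext p
    rw [hactR, hu, hLone p.1 p.2, Module.End.one_apply]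
  · -- lpa2
    intro h x y
    funext p
    have w : Coalgebra.Repr k h (H × H) := Coalgebra.Repr.arbitrary k h
    rw [sweedler_repr _ _ _ _ w, Finset.sum_apply, hactR]
    have hmv : gmaMulL M θ x y p = ∑ l, θ p.1 l p.2 (x (p.1, l)) (y (l, p.2)) := rfl
    rw [hmv, map_sum]
    have hL : ∀ l : Fin n, Lmod p.1 p.2 (u p.1 h) (θ p.1 l p.2 (x (p.1, l)) (y (l, p.2))) =
        ∑ i ∈ w.index, θ p.1 l p.2 (Lmod p.1 l (u p.1 (w.left i)) (x (p.1, l)))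
          (Lmod l p.2 (u l (w.right i)) (y (l, p.2))) := by
      intro l
      rw [hcm p.1 l p.2 h (x (p.1, l)) (y (l, p.2)), ← w.eq, map_sum]
      simp
    simp only [hL]
    rw [Finset.sum_comm]
    refine Finset.sum_congr rfl fun i _ => ?_
    have hmv2 : gmaMulL M θ (actR.flip x (w.left i)) (actR.flip y (w.right i)) p
        = ∑ l, θ p.1 l p.2 (actR (w.left i) x (p.1, l)) (actR (w.right i) y (l, p.2)) := rfl
    rw [hmv2]
    refine Finset.sum_congr rfl fun l _ => ?_
    rw [hactR, hactR]
  · -- lpa3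
    intro h g a
    funext p
    have w : Coalgebra.Repr k h (H × H) := Coalgebra.Repr.arbitrary k h
    rw [sweedler_repr _ _ _ _ w, Finset.sum_apply, hactR, hactR]
    have star := pstarL (θ p.1 p.1 p.1) (e p.1) (acti p.1) (hacti p.1)
      (fun a' => hd.one_mul p.1 p.1 a') (fun a' => hd.mul_one p.1 p.1 a')
      (fun a' b' c' => hd.assoc p.1 p.1 p.1 p.1 a' b' c')
      (θ p.1 p.1 p.2) (Lmod p.1 p.2) (hLmul p.1 p.2) (hre p.1 p.2) h g (a p) w
    rw [← hu p.1 h, ← hu p.1 g] at star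
    rw [star]
    refine Finset.sum_congr rfl fun i _ => ?_
    have hmv : gmaMulL M θ (actR.flip (gmaOne M e) (w.left i))
        (((actR.flip a) ∘ₗ LinearMap.mulRight k g) (w.right i)) p
        = ∑ l, θ p.1 l p.2 (actR (w.left i) (gmaOne M e) (p.1, l))
            (actR (w.right i * g) a (l, p.2)) := rfl
    rw [hmv, Finset.sum_eq_single_of_mem p.1 (Finset.mem_univ p.1)]
    · rw [hactR, hactR, hOne_diag, hact p.1 (w.left i) (e p.1)]
      rw [← hu p.1 (w.right i * g)]
    · intro l _ hl
      rw [hactR, hOne_off p.1 l (Ne.symm hl)]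
      simp
  · -- lpa3'
    intro h g a
    funext p
    have w : Coalgebra.Repr k h (H × H) := Coalgebra.Repr.arbitrary k h
    rw [sweedler_repr _ _ _ _ w, Finset.sum_apply, hactR, hactR,
      hLR p.1 p.2 h, hLR p.1 p.2 g]
    have star := pstarR (θ p.2 p.2 p.2) (e p.2) (acti p.2) (hacti p.2)
      (fun a' => hd.one_mul p.2 p.2 a') (fun a' => hd.mul_one p.2 p.2 a')
      (fun a' b' c' => hd.assoc p.2 p.2 p.2 p.2 a' b' c')
      (θ p.1 p.2 p.2) (Rmod p.1 p.2) (hRmul p.1 p.2) (fun a' m' => hre' p.1 p.2 m' a') h g (a p) w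
    rw [← hv p.2 h, ← hv p.2 g] at star
    rw [star]
    refine Finset.sum_congr rfl fun i _ => ?_
    have hmv : gmaMulL M θ (((actR.flip a) ∘ₗ LinearMap.mulRight k g) (w.left i))
        (actR.flip (gmaOne M e) (w.right i)) p
        = ∑ l, θ p.1 l p.2 (actR (w.left i * g) a (p.1, l))
            (actR (w.right i) (gmaOne M e) (l, p.2)) := rfl
    rw [hmv, Finset.sum_eq_single_of_mem p.2 (Finset.mem_univ p.2)]
    · rw [hactR, hactR, hOne_diag, hact p.2 (w.right i) (e p.2)]
      rw [← hv p.2 (w.left i * g), ← hLR p.1 p.2 (w.left i * g)]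
    · intro l _ hl
      rw [hactR (w.right i) (gmaOne M e) (l, p.2), hOne_off l p.2 hl]
      simp
  · -- invariance
    intro i j h m
    refine ⟨Lmod i j (u i h) m, ?_⟩
    funext p
    rw [hactR]
    simp only [gmaIncl, LinearMap.coe_single]
    by_cases hp : p = (i, j)
    · subst hp
      rw [Pi.single_eq_same, Pi.single_eq_same]
    · rw [Pi.single_eq_of_ne hp, Pi.single_eq_of_ne hp, map_zero]
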